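/- Let λ₁, …, λₙ be a basis of Λ and set ω := ι(λ₁, 0)·ι(λ₂, 0)⋯ι(λₙ, 0) ∈ Cl. Then the kernel of right multiplication by ω on Cl is exactly the left ideal ⟨Λ⟩: {c ∈ Cl : c·ω = 0} = ⟨Λ⟩. Consequently, the map c ↦ c·ω descends to an injective k-linear map S_Λ = Cl/⟨Λ⟩ ↪ Cl, whose image is the left ideal Cl·ω. -/

import Mathlib

noncomputable section

variable (k : Type*) [Field k] (Λ : Type*) [AddCommGroup Λ] [Module k Λ]

/-- The hyperbolic quadratic form `Q (x, φ) = φ x` on `H = Λ × Λ*`. -/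
def hypQ : QuadraticForm k (Λ × Module.Dual k Λ) :=
  (QuadraticForm.dualProd k Λ).comp (LinearEquiv.prodComm k Λ (Module.Dual k Λ)).toLinearMap

/-- The left ideal `⟨Λ⟩` of the Clifford algebra of `(H, Q)` generated by
`{ι (λ, 0) : λ ∈ Λ}`. -/
def leftIdealΛ : Submodule (CliffordAlgebra (hypQ k Λ)) (CliffordAlgebra (hypQ k Λ)) :=
  Submodule.span (CliffordAlgebra (hypQ k Λ))
    (Set.range fun l : Λ => CliffordAlgebra.ι (hypQ k Λ) (l, 0))

lemma hypQ_apply (x : Λ) (φ : Module.Dual k Λ) : hypQ k Λ (x, φ) = φ x := rfl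

lemma polar_hypQ (x x' : Λ) (φ φ' : Module.Dual k Λ) :
    QuadraticMap.polar (hypQ k Λ) (x, φ) (x', φ') = φ x' + φ' x := by
  simp [QuadraticMap.polar, hypQ]
  ring

/-- Moving an element which anticommutes with every member of a list through the
product of the list. -/
lemma mul_listProd_of_anticomm {R : Type*} [Ring R] (x : R) :
    ∀ M : List R, (∀ y ∈ M, x * y = -(y * x)) →
      x * M.prod = ((-1 : ℤ) ^ M.length) • (M.prod * x) := by
  intro M
  induction M with
  | nil => simp
  | cons y M ih =>
    intro h
    have hy := h y List.mem_cons_self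
    have hM : ∀ z ∈ M, x * z = -(z * x) := fun z hz => h z (List.mem_cons_of_mem _ hz)
    simp only [List.prod_cons, List.length_cons]
    calc x * (y * M.prod) = (x * y) * M.prod := by rw [mul_assoc]
      _ = -(y * (x * M.prod)) := by rw [hy, neg_mul, mul_assoc]
      _ = -(((-1 : ℤ) ^ M.length) • (y * (M.prod * x))) := by rw [ih hM, mul_smul_comm]
      _ = ((-1 : ℤ) ^ (M.length + 1)) • (y * M.prod * x) := by
          rw [pow_succ, mul_smul, neg_one_zsmul, smul_neg, ← mul_assoc]

/-- If `a` belongs to a list of pairwise anticommuting square-zero elements, then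
`f a` kills the product of the list. -/
lemma mul_listProd_eq_zero {R : Type*} [Ring R] {α : Type*} (f : α → R)
    (hsq : ∀ a, f a * f a = 0) (hac : ∀ a b, f a * f b = -(f b * f a)) :
    ∀ (L : List α) (a : α), a ∈ L → f a * (L.map f).prod = 0 := by
  intro L
  induction L with
  | nil => intro a ha; simp at ha
  | cons c L ih =>
    intro a ha
    rcases List.mem_cons.mp ha with h | h
    · subst h
      simp only [List.map_cons, List.prod_cons, ← mul_assoc, hsq, zero_mul]
    · simp only [List.map_cons, List.prod_cons, ← mul_assoc, hac a c]
      rw [neg_mul, mul_assoc, ih a h, mul_zero, neg_zero]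

/-- The key algebraic lemma: with `f`, `g` a pair of "dual" families of
anticommuting square-zero elements, `1 - (f₁⋯fₘ)(gₘ⋯g₁)` lies in the left ideal
generated by the `f`'s. -/
lemma one_sub_omega_mul_omega'_mem {R : Type*} [Ring R] {α : Type*}
    (I : Submodule R R) (f g : α → R)
    (hfI : ∀ a, f a ∈ I)
    (hfg1 : ∀ a, f a * g a + g a * f a = 1)
    (hff : ∀ a b, f a * f b = -(f b * f a))
    (hgg : ∀ a b, g a * g b = -(g b * g a))
    (hfg : ∀ a b, a ≠ b → f a * g b = -(g b * f a)) :
    ∀ L : List α, L.Nodup → 1 - (L.map f).prod * ((L.map g).reverse).prod ∈ I := by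
  intro L
  induction L with
  | nil => intro _; simp
  | cons a L ih =>
    intro hnd
    obtain ⟨ha, hnd'⟩ := List.nodup_cons.mp hnd
    set P := (L.map f).prod with hP
    set G := ((L.map g).reverse).prod with hG
    have hPG : 1 - P * G ∈ I := ih hnd'
    -- the combined list
    set M : List R := L.map f ++ (L.map g).reverse with hM
    have hMprod : M.prod = P * G := by rw [hM, List.prod_append]
    have hMlen : M.length = L.length + L.length := by simp [hM]
    have hmem : ∀ y ∈ M, ∃ b ∈ L, y = f b ∨ y = g b := by
      intro y hy
      rcases List.mem_append.mp hy with h | h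
      · obtain ⟨b, hb, rfl⟩ := List.mem_map.mp h
        exact ⟨b, hb, Or.inl rfl⟩
      · obtain ⟨b, hb, rfl⟩ := List.mem_map.mp (List.mem_reverse.mp h)
        exact ⟨b, hb, Or.inr rfl⟩
    -- g a anticommutes with everything in M
    have hgaM : g a * (P * G) = (P * G) * g a := by
      have := mul_listProd_of_anticomm (g a) M ?_
      · rw [hMprod] at this
        rw [this, hMlen, ← two_mul, pow_mul]
        norm_num
      · intro y hy
        obtain ⟨b, hb, hcase⟩ := hmem y hy
        have hne : b ≠ a := fun h => ha (h ▸ hb)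
        rcases hcase with rfl | rfl
        · have h' := hfg b a hne
          rw [h', neg_neg]
        · exact hgg a b
    -- f a anticommutes with everything in M
    have hfaM : f a * (P * G) = (P * G) * f a := by
      have := mul_listProd_of_anticomm (f a) M ?_
      · rw [hMprod] at this
        rw [this, hMlen, ← two_mul, pow_mul]
        norm_num
      · intro y hy
        obtain ⟨b, hb, hcase⟩ := hmem y hy
        have hne : a ≠ b := fun h => ha (h ▸ hb)
        rcases hcase with rfl | rfl
        · exact hff a b
        · exact hfg a b hne
    have hfaga : f a * g a = 1 - g a * f a := eq_sub_of_add_eq (hfg1 a)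
    have hconsf : ((a :: L).map f).prod = f a * P := by
      simp [hP]
    have hconsg : (((a :: L).map g).reverse).prod = G * g a := by
      simp [hG]
    have hprod : (f a * P) * (G * g a) = P * G - (g a * (P * G)) * f a := by
      calc (f a * P) * (G * g a)
          = f a * ((P * G) * g a) := by
            rw [mul_assoc, ← mul_assoc P G (g a)]
        _ = f a * (g a * (P * G)) := by rw [← hgaM]
        _ = (f a * g a) * (P * G) := by rw [mul_assoc]
        _ = (1 - g a * f a) * (P * G) := by rw [hfaga]
        _ = P * G - g a * (f a * (P * G)) := by rw [sub_mul, one_mul, mul_assoc]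
        _ = P * G - (g a * (P * G)) * f a := by rw [hfaM, ← mul_assoc]
    rw [hconsf, hconsg, hprod]
    have h1 : (1 : R) - (P * G - (g a * (P * G)) * f a)
        = (1 - P * G) + (g a * (P * G)) * f a := by noncomm_ring
    rw [h1]
    refine I.add_mem hPG ?_
    have h2 := I.smul_mem (g a * (P * G)) (hfI a)
    rwa [smul_eq_mul] at h2

/-- For a basis `λ₁, …, λₙ` of `Λ`, set
`ω := ι(λ₁,0)·ι(λ₂,0)⋯ι(λₙ,0)`. The kernel of right multiplication by `ω` on `Cl` is
exactly the left ideal `⟨Λ⟩`; consequently `c ↦ c·ω` descends to an injective `k`-linear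
map `S_Λ = Cl/⟨Λ⟩ ↪ Cl` whose image is the left ideal `Cl·ω`. -/
theorem kernel_of_right_multiplication_by_omega
    (n : ℕ) (b : Module.Basis (Fin n) k Λ)
    (ω : CliffordAlgebra (hypQ k Λ))
    (hω : ω = (List.ofFn fun i : Fin n => CliffordAlgebra.ι (hypQ k Λ) (b i, 0)).prod) :
    (∀ c : CliffordAlgebra (hypQ k Λ), c * ω = 0 ↔ c ∈ leftIdealΛ k Λ)
    -- consequently, `c ↦ c·ω` descends to an injective map on `S_Λ = Cl/⟨Λ⟩` …
    ∧ (∀ c c' : CliffordAlgebra (hypQ k Λ), c * ω = c' * ω ↔ c - c' ∈ leftIdealΛ k Λ)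
    -- … whose image is the left ideal `Cl·ω`
    ∧ Set.range (fun c : CliffordAlgebra (hypQ k Λ) => c * ω)
      = {x : CliffordAlgebra (hypQ k Λ) | ∃ c, x = c * ω} := by
  set f : Fin n → CliffordAlgebra (hypQ k Λ) :=
    fun i => CliffordAlgebra.ι (hypQ k Λ) (b i, 0) with hf
  set g : Fin n → CliffordAlgebra (hypQ k Λ) :=
    fun i => CliffordAlgebra.ι (hypQ k Λ) (0, b.coord i) with hg
  -- basic anticommutation relations from the polar form
  have hpolar : ∀ (x x' : Λ) (φ φ' : Module.Dual k Λ),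
      CliffordAlgebra.ι (hypQ k Λ) (x, φ) * CliffordAlgebra.ι (hypQ k Λ) (x', φ')
        + CliffordAlgebra.ι (hypQ k Λ) (x', φ') * CliffordAlgebra.ι (hypQ k Λ) (x, φ)
        = algebraMap k (CliffordAlgebra (hypQ k Λ)) (φ x' + φ' x) := by
    intro x x' φ φ'
    rw [CliffordAlgebra.ι_mul_ι_add_swap, polar_hypQ]
  have hff : ∀ i j, f i * f j = -(f j * f i) := by
    intro i j
    have h := hpolar (b i) (b j) 0 0
    simp only [LinearMap.zero_apply, add_zero, map_zero] at h
    exact eq_neg_of_add_eq_zero_left h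
  have hgg : ∀ i j, g i * g j = -(g j * g i) := by
    intro i j
    have h := hpolar 0 0 (b.coord i) (b.coord j)
    simp only [map_zero, add_zero, zero_add] at h
    exact eq_neg_of_add_eq_zero_left h
  have hcoord : ∀ i j : Fin n, b.coord j (b i) = if i = j then 1 else 0 := by
    intro i j
    rw [Module.Basis.coord_apply, Module.Basis.repr_self, Finsupp.single_apply]
  have hfg1 : ∀ i, f i * g i + g i * f i = 1 := by
    intro i
    have h := hpolar (b i) 0 0 (b.coord i)
    rw [hcoord i i] at h
    simpa using h
  have hfg : ∀ i j, i ≠ j → f i * g j = -(g j * f i) := by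
    intro i j hij
    have h := hpolar (b i) 0 0 (b.coord j)
    rw [hcoord i j, if_neg hij] at h
    simp only [LinearMap.zero_apply, zero_add, map_zero, add_zero, map_add] at h
    exact eq_neg_of_add_eq_zero_left h
  have hsq : ∀ i, f i * f i = 0 := by
    intro i
    have h := CliffordAlgebra.ι_sq_scalar (hypQ k Λ) (b i, 0)
    rw [show hypQ k Λ (b i, (0 : Module.Dual k Λ)) = 0 from rfl, map_zero] at h
    exact h
  have hωL : ω = ((List.finRange n).map f).prod := by
    rw [hω, List.ofFn_eq_map]
  have hfI : ∀ i, f i ∈ leftIdealΛ k Λ :=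
    fun i => Submodule.subset_span ⟨b i, rfl⟩
  -- easy direction: every generator kills ω
  have hgen : ∀ l : Λ, CliffordAlgebra.ι (hypQ k Λ) (l, 0) * ω = 0 := by
    intro l
    let Φ : Λ →ₗ[k] CliffordAlgebra (hypQ k Λ) :=
      (LinearMap.mulRight k ω).comp ((CliffordAlgebra.ι (hypQ k Λ)).comp
        (LinearMap.inl k Λ (Module.Dual k Λ)))
    have hΦ : Φ = 0 := by
      apply b.ext
      intro i
      have h0 : f i * ((List.finRange n).map f).prod = 0 :=
        mul_listProd_eq_zero f hsq hff (List.finRange n) i (List.mem_finRange i)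
      simpa [Φ, hωL] using h0
    have h := LinearMap.congr_fun hΦ l
    simpa [Φ] using h
  have hmem_zero : ∀ c : CliffordAlgebra (hypQ k Λ), c ∈ leftIdealΛ k Λ → c * ω = 0 := by
    intro c hc
    induction hc using Submodule.span_induction with
    | mem x hx => obtain ⟨l, rfl⟩ := hx; exact hgen l
    | zero => simp
    | add x y _ _ hx hy => rw [add_mul, hx, hy, add_zero]
    | smul a x _ hx => rw [smul_eq_mul, mul_assoc, hx, mul_zero]
  -- hard direction via the key lemma
  set ω' : CliffordAlgebra (hypQ k Λ) := (((List.finRange n).map g).reverse).prod with hω'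
  have hkey : 1 - ω * ω' ∈ leftIdealΛ k Λ := by
    rw [hωL, hω']
    exact one_sub_omega_mul_omega'_mem (leftIdealΛ k Λ) f g hfI hfg1 hff hgg hfg
      (List.finRange n) (List.nodup_finRange n)
  have hzero_mem : ∀ c : CliffordAlgebra (hypQ k Λ),
      c * ω = 0 → c ∈ leftIdealΛ k Λ := by
    intro c hc
    have hdecomp : c = c * (1 - ω * ω') := by
      rw [mul_sub, mul_one, ← mul_assoc, hc, zero_mul, sub_zero]
    rw [hdecomp]
    have h := (leftIdealΛ k Λ).smul_mem c hkey
    rwa [smul_eq_mul] at h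
  have h1 : ∀ c : CliffordAlgebra (hypQ k Λ), c * ω = 0 ↔ c ∈ leftIdealΛ k Λ :=
    fun c => ⟨hzero_mem c, hmem_zero c⟩
  refine ⟨h1, ?_, ?_⟩
  · intro c c'
    rw [← h1 (c - c'), sub_mul, sub_eq_zero]
  · ext x
    simp only [Set.mem_range, Set.mem_setOf_eq, eq_comm]

end
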